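/- Let K be a finite field with q elements, where q ≡ 3 (mod 4) and q > 3. Then there exist X, Y ∈ K with X ∉ {0, −1}, Y ∉ {0, −1}, X² + Y² + X + Y = 0, and moreover necessarily X² ≠ Y². -/

import Mathlib

theorem stmt_13 (q : ℕ) (hq_pp : IsPrimePow q) (hq3 : q % 4 = 3) (hq : 3 < q)
    (K : Type*) [Field K] [Fintype K] (hK : Fintype.card K = q) :
    ∃ X Y : K, X ≠ 0 ∧ X ≠ -1 ∧ Y ≠ 0 ∧ Y ≠ -1 ∧
      X ^ 2 + Y ^ 2 + X + Y = 0 ∧ X ^ 2 ≠ Y ^ 2 := by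
  classical
  -- -1 is not a square
  have hns : ¬ IsSquare (-1 : K) := by
    rw [FiniteField.isSquare_neg_one_iff, hK, hq3]; simp
  -- find t ∉ {0, 1, -1}
  obtain ⟨t, ht⟩ : ∃ t : K, t ∉ ({0, 1, -1} : Finset K) := by
    by_contra h
    push_neg at h
    have hsub : (Finset.univ : Finset K) ⊆ {0, 1, -1} := fun x _ => h x
    have := Finset.card_le_card hsub
    simp only [Finset.card_univ, hK] at this
    have h3 : ({0, 1, -1} : Finset K).card ≤ 3 := by
      apply le_trans (Finset.card_insert_le _ _)
      simp [Finset.card_insert_le]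
      exact Nat.lt_of_le_of_lt (Finset.card_insert_le _ _) (by simp)
    omega
  simp only [Finset.mem_insert, Finset.mem_singleton, not_or] at ht
  obtain ⟨ht0, ht1, htm1⟩ := ht
  -- t² + 1 ≠ 0
  have hd : t ^ 2 + 1 ≠ 0 := by
    intro h
    exact hns ⟨t, by linear_combination -h - sq t⟩
  have htp1 : t + 1 ≠ 0 := fun h => htm1 (by linear_combination h)
  set Y : K := -(t + 1) / (t ^ 2 + 1) with hY
  have hYne : Y ≠ 0 := by
    rw [hY, div_ne_zero_iff]
    exact ⟨neg_ne_zero.mpr htp1, hd⟩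
  refine ⟨t * Y, Y, mul_ne_zero ht0 hYne, ?_, hYne, ?_, ?_, ?_⟩
  · intro h
    rw [hY, ← mul_div_assoc, div_eq_iff hd] at h
    exact ht1 (by linear_combination -h)
  · intro h
    rw [hY, div_eq_iff hd] at h
    have : t * (t - 1) = 0 := by linear_combination h
    rcases mul_eq_zero.mp this with h' | h'
    · exact ht0 h'
    · exact ht1 (by linear_combination h')
  · rw [hY]
    field_simp
    ring
  · intro h
    have : (t - 1) * (t + 1) * Y ^ 2 = 0 := by linear_combination h
    rcases mul_eq_zero.mp this with h' | h'
    · rcases mul_eq_zero.mp h' with h'' | h''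
      · exact ht1 (by linear_combination h'')
      · exact htm1 (by linear_combination h'')
    · exact hYne (pow_eq_zero_iff (by norm_num) |>.mp h')
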